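/- Let L : ℝ → (−∞,+∞] be a proper, convex, lower semicontinuous function with L(0) = 0, let L* be its Legendre–Fenchel transform, and let {z_k : k ≥ 1} be a countable dense subset of dom L*. For n ≥ 1 define the probability measure μ_n = ( Σ_{k=1}^n e^{−n·L*(z_k)} δ_{z_k} ) / ( Σ_{k=1}^n e^{−n·L*(z_k)} ) on ℝ. Then for every t ∈ ℝ the limit lim_{n→∞} (1/n)·log ∫_ℝ e^{n·t·z} dμ_n(z) exists in [-∞,+∞] and equals L(t); in other words, the generalized log-moment generating function of the sequence (μ_n, 1/n) exists as a limit at every t and coincides with L. -/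

import Mathlib

open Filter MeasureTheory Set Topology

noncomputable section

/-- `c · log m` as an extended real number, where `m ∈ [0,∞]`. -/
def elog (c : ℝ) (m : ENNReal) : EReal := (c : EReal) * ENNReal.log m

/-- The generalized log-moment generating function `L̄` associated with the net
`(μ_α, c_α)` indexed by the filter `lf`:
`L̄(t) = limsup_α c_α · log ∫ exp(t·x/c_α) dμ_α(x)`. -/
def genLogMGF {ι : Type*} (lf : Filter ι) (μ : ι → Measure ℝ) (c : ι → ℝ) (t : ℝ) : EReal :=
  Filter.limsup
    (fun i => elog (c i) (∫⁻ x : ℝ, ENNReal.ofReal (Real.exp (t * x / c i)) ∂ (μ i))) lf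

/-- Legendre–Fenchel transform of an `EReal`-valued function on `ℝ`, evaluated at an
extended real argument: `L*(x) = sup_t (t·x − L(t))`. -/
def LegendreEE (L : ℝ → EReal) (x : EReal) : EReal := ⨆ t : ℝ, ((t : EReal) * x - L t)

open Classical in
/-- The right derivative of a convex `EReal`-valued function at `t`, with the conventions
`L'_r(t) = +∞` when `L(s) = +∞` for all `s > t` and `L'_r(t) = -∞` when `L(s) = -∞` for
some `s > t`; otherwise it is the infimum of the right difference quotients. -/
def rightDerivE (L : ℝ → EReal) (t : ℝ) : EReal :=
  if ∀ s : ℝ, t < s → L s = ⊤ then ⊤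
  else if ∃ s : ℝ, t < s ∧ L s = ⊥ then ⊥
  else ⨅ s ∈ Set.Ioi t, (L s - L t) * (((s - t)⁻¹ : ℝ) : EReal)

/-- The left derivative of a convex `EReal`-valued function at `t` (supremum of left
difference quotients). -/
def leftDerivE (L : ℝ → EReal) (t : ℝ) : EReal :=
  ⨆ s ∈ Set.Iio t, (L t - L s) * (((t - s)⁻¹ : ℝ) : EReal)

/-- Right limit at `a` of an `EReal`-valued function (as a `limsup`; it coincides with
`lim_{t→a⁺} f(t)` whenever the latter exists, e.g. for monotone or convex `f`). -/
def rightLimE (f : ℝ → EReal) (a : ℝ) : EReal := Filter.limsup f (nhdsWithin a (Set.Ioi a))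

/-- Left limit at `a` of an `EReal`-valued function (as a `limsup`; it coincides with
`lim_{t→a⁻} f(t)` whenever the latter exists). -/
def leftLimE (f : ℝ → EReal) (a : ℝ) : EReal := Filter.limsup f (nhdsWithin a (Set.Iio a))

/-- `L` is affine on the interval `(a, b]`. -/
def AffineOnIoc (L : ℝ → EReal) (a b : ℝ) : Prop :=
  ∃ p q : ℝ, ∀ s ∈ Set.Ioc a b, L s = ((p * s + q : ℝ) : EReal)

/-- `λ̃ = sup {t > λ : L is affine on (λ, t]}` (equal to `λ` if there is no such `t`). -/
def tildeOf (L : ℝ → EReal) (lam : ℝ) : ℝ :=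
  sSup (insert lam {t : ℝ | lam < t ∧ AffineOnIoc L lam t})

/-- Differentiability at `t` of an `EReal`-valued function: `L(t)` is finite and the
difference quotients converge to a (finite) real number. -/
def EDifferentiableAt (L : ℝ → EReal) (t : ℝ) : Prop :=
  (∃ r : ℝ, L t = (r : EReal)) ∧
  ∃ d : ℝ, Filter.Tendsto (fun s => (L s - L t) * (((s - t)⁻¹ : ℝ) : EReal))
    (nhdsWithin t {t}ᶜ) (nhds (d : EReal))

/-- The function `l₀(x) = − lim_{ε→0⁺} limsup_α c_α · log μ_α((x−ε, x+ε))` (the limit over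
`ε` exists by monotonicity and equals the infimum). -/
def l0fun {ι : Type*} (lf : Filter ι) (μ : ι → Measure ℝ) (c : ι → ℝ) (x : ℝ) : EReal :=
  - ⨅ ε ∈ Set.Ioi (0:ℝ),
      Filter.limsup (fun i => elog (c i) (μ i (Set.Ioo (x - ε) (x + ε)))) lf

/-- `L` restricted to `[0,∞)` is proper: `(−∞,+∞]`-valued with at least one finite value. -/
def LbarProper (L : ℝ → EReal) : Prop :=
  (∀ t : ℝ, 0 ≤ t → L t ≠ ⊥) ∧ ∃ t : ℝ, 0 ≤ t ∧ L t ≠ ⊤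

/-- `μ([x, y])` for extended-real endpoints `x, y`, with `μ` regarded as a measure on
`[-∞, +∞]`. -/
def muIccE (μ : Measure ℝ) (x y : EReal) : ENNReal :=
  μ {z : ℝ | x ≤ (z : EReal) ∧ (z : EReal) ≤ y}

/-- `μ((x, y))` for extended-real endpoints `x, y`. -/
def muIooE (μ : Measure ℝ) (x y : EReal) : ENNReal :=
  μ {z : ℝ | x < (z : EReal) ∧ (z : EReal) < y}

open Classical in
/-- The Legendre transform extended to `[-∞,+∞]` by continuity, with the paper's
convention `L̄*(−∞) = −L̄(0⁺)`. -/
def LegendreExt (L : ℝ → EReal) (x : EReal) : EReal :=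
  if x = ⊥ then -(rightLimE L 0) else if x = ⊤ then ⊤ else LegendreEE L x

end

/-- The probability measure `μ_n = (∑_{k<n} e^{-n L*(z_k)} δ_{z_k}) / (∑_{k<n} e^{-n L*(z_k)})`. -/
noncomputable def paperMeasure (L : ℝ → EReal) (zk : ℕ → ℝ) (n : ℕ) : Measure ℝ :=
  (∑ k ∈ Finset.range n,
      ENNReal.ofReal (Real.exp (-(n : ℝ) * (LegendreEE L ((zk k : ℝ) : EReal)).toReal)))⁻¹ •
    ∑ k ∈ Finset.range n,
      ENNReal.ofReal (Real.exp (-(n : ℝ) * (LegendreEE L ((zk k : ℝ) : EReal)).toReal)) •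
        MeasureTheory.Measure.dirac (zk k)

set_option maxHeartbeats 1000000

lemma ereal_exists_real {x : EReal} (hb : x ≠ ⊥) (ht : x ≠ ⊤) : ∃ r : ℝ, x = (r : EReal) :=
  ⟨x.toReal, (EReal.coe_toReal ht hb).symm⟩

lemma inv_log_nat_tendsto : Tendsto (fun n : ℕ => ((n:ℝ))⁻¹ * Real.log n) atTop (𝓝 0) := by
  have h := Real.isLittleO_log_id_atTop.tendsto_div_nhds_zero
  have h2 := h.comp (tendsto_natCast_atTop_atTop (R := ℝ))
  simpa [Function.comp_def, div_eq_inv_mul] using h2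

lemma logsumexp (a : ℕ → ℝ) :
    Tendsto (fun n : ℕ => ((((n:ℝ))⁻¹ * Real.log (∑ k ∈ Finset.range n,
        Real.exp ((n:ℝ) * a k)) : ℝ) : EReal)) atTop (𝓝 (⨆ k, (a k : EReal))) := by
  set f : ℕ → EReal := fun n => ((((n:ℝ))⁻¹ * Real.log (∑ k ∈ Finset.range n,
      Real.exp ((n:ℝ) * a k)) : ℝ) : EReal) with hf
  have hSpos : ∀ n : ℕ, 1 ≤ n → 0 < ∑ k ∈ Finset.range n, Real.exp ((n:ℝ) * a k) := by
    intro n hn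
    exact Finset.sum_pos (fun k _ => Real.exp_pos _) (Finset.nonempty_range_iff.2 (by omega))
  have hlb : ∀ k : ℕ, ∀ n : ℕ, k + 1 ≤ n → (a k : EReal) ≤ f n := by
    intro k n hn
    have hnR : (0:ℝ) < (n:ℝ) := by
      have : 1 ≤ n := by omega
      exact_mod_cast Nat.lt_of_lt_of_le Nat.zero_lt_one this
    have h1 : Real.exp ((n:ℝ) * a k) ≤ ∑ j ∈ Finset.range n, Real.exp ((n:ℝ) * a j) :=
      Finset.single_le_sum (f := fun j => Real.exp ((n:ℝ) * a j)) (fun i _ => (Real.exp_pos _).le) (Finset.mem_range.2 (by omega : k < n))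
    have h2 : (n:ℝ) * a k ≤ Real.log (∑ j ∈ Finset.range n, Real.exp ((n:ℝ) * a j)) := by
      have := Real.log_le_log (Real.exp_pos _) h1
      rwa [Real.log_exp] at this
    rw [hf, EReal.coe_le_coe_iff]
    calc a k = (n:ℝ)⁻¹ * ((n:ℝ) * a k) := by field_simp
    _ ≤ _ := mul_le_mul_of_nonneg_left h2 (by positivity)
  have hliminf : (⨆ k, (a k : EReal)) ≤ liminf f atTop := by
    apply iSup_le; intro k
    apply Filter.le_liminf_of_le (by isBoundedDefault)
    filter_upwards [eventually_ge_atTop (k+1)] with n hn using hlb k n hn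
  have hlimsup : limsup f atTop ≤ ⨆ k, (a k : EReal) := by
    by_cases hS : (⨆ k, (a k : EReal)) = ⊤
    · rw [hS]; exact le_top
    · have hSb : (⨆ k, (a k : EReal)) ≠ ⊥ := by
        intro h
        have := le_iSup (fun k => (a k : EReal)) 0
        rw [h, le_bot_iff] at this
        exact (EReal.coe_ne_bot _) this
      obtain ⟨M, hM⟩ := ereal_exists_real hSb hS
      have hak : ∀ k, a k ≤ M := by
        intro k
        have := le_iSup (fun k => (a k : EReal)) k
        rw [hM] at this
        exact_mod_cast this
      have hub : ∀ n : ℕ, 1 ≤ n → f n ≤ ((((n:ℝ))⁻¹ * Real.log n + M : ℝ) : EReal) := by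
        intro n hn
        have hpos := hSpos n hn
        have hnR : (0:ℝ) < (n:ℝ) := by
          exact_mod_cast Nat.lt_of_lt_of_le Nat.zero_lt_one hn
        have hsum : (∑ k ∈ Finset.range n, Real.exp ((n:ℝ) * a k))
            ≤ (n:ℝ) * Real.exp ((n:ℝ) * M) := by
          have := Finset.sum_le_card_nsmul (Finset.range n)
            (fun k => Real.exp ((n:ℝ) * a k)) (Real.exp ((n:ℝ) * M))
            (fun k _ => Real.exp_le_exp.2 (mul_le_mul_of_nonneg_left (hak k) hnR.le))
          simpa [Finset.card_range, nsmul_eq_mul] using this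
        have hlog : Real.log (∑ k ∈ Finset.range n, Real.exp ((n:ℝ) * a k))
            ≤ Real.log n + (n:ℝ) * M := by
          have h1 := Real.log_le_log hpos hsum
          rwa [Real.log_mul hnR.ne' (Real.exp_pos _).ne', Real.log_exp] at h1
        rw [hf, EReal.coe_le_coe_iff]
        have := mul_le_mul_of_nonneg_left hlog (inv_nonneg.2 hnR.le)
        calc ((n:ℝ))⁻¹ * Real.log (∑ k ∈ Finset.range n, Real.exp ((n:ℝ) * a k))
            ≤ ((n:ℝ))⁻¹ * (Real.log n + (n:ℝ) * M) := this
        _ = ((n:ℝ))⁻¹ * Real.log n + M := by field_simp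
      have h2 : limsup f atTop ≤
          limsup (fun n : ℕ => ((((n:ℝ))⁻¹ * Real.log n + M : ℝ) : EReal)) atTop := by
        exact limsup_le_limsup (by
          filter_upwards [eventually_ge_atTop 1] with n hn using hub n hn)
      have h3 : Tendsto (fun n : ℕ => ((((n:ℝ))⁻¹ * Real.log n + M : ℝ) : EReal)) atTop
          (𝓝 (M : EReal)) := by
        rw [EReal.tendsto_coe]
        simpa using inv_log_nat_tendsto.add (tendsto_const_nhds (x := M))
      rw [hM]
      exact h2.trans (le_of_eq h3.limsup_eq)
  exact tendsto_of_le_liminf_of_limsup_le hliminf hlimsup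

section FM
variable {L : ℝ → EReal}
variable {L : ℝ → EReal}

lemma lst_eq (L : ℝ → EReal) (z : ℝ) :
    LegendreEE L (z:EReal) = ⨆ s : ℝ, (((s * z : ℝ) : EReal) - L s) := by
  simp only [LegendreEE, EReal.coe_mul]

lemma term_le (s z : ℝ) : ((s * z : ℝ) : EReal) - L s ≤ LegendreEE L (z:EReal) := by
  rw [lst_eq]; exact le_iSup (fun s => ((s * z : ℝ) : EReal) - L s) s

lemma lst_nonneg (hzero : L 0 = 0) (z : ℝ) : (0:EReal) ≤ LegendreEE L (z:EReal) := by
  have := term_le (L := L) 0 z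
  simpa [hzero] using this

lemma lst_ne_bot (hzero : L 0 = 0) (z : ℝ) : LegendreEE L (z:EReal) ≠ ⊥ := by
  intro h
  have := lst_nonneg hzero z
  rw [h, le_bot_iff] at this
  exact EReal.zero_ne_bot this

lemma term_le_real {s z r : ℝ} (hr : L s = (r:EReal)) :
    ∀ {c : ℝ}, LegendreEE L (z:EReal) = (c:EReal) → s * z - r ≤ c := by
  intro c hc
  have := term_le (L := L) s z
  rw [hr, hc, ← EReal.coe_sub, EReal.coe_le_coe_iff] at this
  exact this

/-- convexity of the Legendre transform, real form -/
lemma lst_convex (hbot : ∀ t, L t ≠ ⊥) {x y cx cy : ℝ}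
    (hx : LegendreEE L (x:EReal) = (cx:EReal)) (hy : LegendreEE L (y:EReal) = (cy:EReal))
    {θ : ℝ} (h0 : 0 ≤ θ) (h1 : θ ≤ 1) :
    LegendreEE L ((((1-θ)*x + θ*y : ℝ)):EReal) ≤ (((1-θ)*cx + θ*cy : ℝ) : EReal) := by
  rw [lst_eq]; apply iSup_le; intro s
  by_cases hs : L s = ⊤
  · rw [hs, EReal.sub_top]; exact bot_le
  · obtain ⟨r, hr⟩ := ereal_exists_real (hbot s) hs
    have hx' : s*x - r ≤ cx := term_le_real hr hx
    have hy' : s*y - r ≤ cy := term_le_real hr hy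
    rw [hr, ← EReal.coe_sub, EReal.coe_le_coe_iff]
    nlinarith [mul_le_mul_of_nonneg_left hx' (by linarith : (0:ℝ) ≤ 1 - θ),
      mul_le_mul_of_nonneg_left hy' h0]

def epiSet (L : ℝ → EReal) : Set (ℝ × ℝ) := {p | L p.1 ≤ (p.2 : EReal)}

lemma epi_convex (hconv : ∀ p q a b : ℝ, 0 ≤ a → 0 ≤ b → a + b = 1 →
      L (a * p + b * q) ≤ (a : EReal) * L p + (b : EReal) * L q) :
    Convex ℝ (epiSet L) := by
  intro p hp q hq a b ha hb hab
  simp only [epiSet, mem_setOf_eq] at hp hq ⊢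
  have hfst : (a • p + b • q).1 = a * p.1 + b * q.1 := rfl
  have hsnd : (a • p + b • q).2 = a * p.2 + b * q.2 := rfl
  rw [hfst, hsnd]
  calc L (a * p.1 + b * q.1) ≤ (a : EReal) * L p.1 + (b : EReal) * L q.1 :=
        hconv p.1 q.1 a b ha hb hab
  _ ≤ (a : EReal) * (p.2 : EReal) + (b : EReal) * (q.2 : EReal) :=
        add_le_add (mul_le_mul_of_nonneg_left hp (EReal.coe_nonneg.2 ha))
          (mul_le_mul_of_nonneg_left hq (EReal.coe_nonneg.2 hb))
  _ = ((a * p.2 + b * q.2 : ℝ) : EReal) := by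
        rw [EReal.coe_add, EReal.coe_mul, EReal.coe_mul]

lemma epi_closed (hlsc : LowerSemicontinuous L) : IsClosed (epiSet L) := by
  rw [← isOpen_compl_iff, isOpen_iff_mem_nhds]
  rintro ⟨x, y⟩ hp
  simp only [mem_compl_iff, epiSet, mem_setOf_eq, not_le] at hp
  obtain ⟨r, hr1, hr2⟩ := EReal.exists_between_coe_real hp
  have hU : {x' : ℝ | (r:EReal) < L x'} ∈ 𝓝 x := hlsc x r hr2
  have hV : Iio r ∈ 𝓝 y := Iio_mem_nhds (EReal.coe_lt_coe_iff.1 hr1)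
  rw [nhds_prod_eq]
  apply mem_of_superset (prod_mem_prod hU hV)
  rintro ⟨x', y'⟩ ⟨h1, h2⟩
  simp only [mem_compl_iff, epiSet, mem_setOf_eq, not_le]
  exact lt_trans (EReal.coe_lt_coe_iff.2 h2) h1

lemma clm_eval (f : (ℝ × ℝ) →L[ℝ] ℝ) (x y : ℝ) :
    f (x, y) = f (1, 0) * x + f (0, 1) * y := by
  have hxy : ((x, y) : ℝ × ℝ) = x • ((1:ℝ), (0:ℝ)) + y • ((0:ℝ), (1:ℝ)) := by
    simp [Prod.ext_iff]
  rw [hxy, f.map_add, f.map_smul, f.map_smul, smul_eq_mul, smul_eq_mul]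
  ring

lemma exists_minorant (hbot : ∀ t, L t ≠ ⊥) (hfin : ∃ t, L t ≠ ⊤)
    (hconv : ∀ p q a b : ℝ, 0 ≤ a → 0 ≤ b → a + b = 1 →
      L (a * p + b * q) ≤ (a : EReal) * L p + (b : EReal) * L q)
    (hlsc : LowerSemicontinuous L) :
    ∃ m q : ℝ, ∀ s, ((m * s + q : ℝ):EReal) ≤ L s := by
  obtain ⟨t0, ht0⟩ := hfin
  obtain ⟨r0, hr0⟩ := ereal_exists_real (hbot t0) ht0
  have hmem : ((t0, r0) : ℝ × ℝ) ∈ epiSet L := le_of_eq hr0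
  have hnot : ((t0, r0 - 1) : ℝ × ℝ) ∉ epiSet L := by
    simp only [epiSet, mem_setOf_eq, hr0, not_le]
    exact EReal.coe_lt_coe_iff.2 (by linarith)
  obtain ⟨f, u, hfu, hsep⟩ :=
    geometric_hahn_banach_point_closed (epi_convex hconv) (epi_closed hlsc) hnot
  set a := f (1, 0) with ha
  set b := f (0, 1) with hbdef
  have hfu' : a * t0 + b * (r0 - 1) < u := by rw [← clm_eval]; exact hfu
  have hu0 : u < a * t0 + b * r0 := by
    have := hsep _ hmem; rwa [clm_eval] at this
  have hb : 0 < b := by nlinarith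
  refine ⟨-a/b, u/b, fun s => ?_⟩
  by_cases hs : L s = ⊤
  · rw [hs]; exact le_top
  · obtain ⟨r, hr⟩ := ereal_exists_real (hbot s) hs
    have hsr : u < a * s + b * r := by
      have := hsep (s, r) (le_of_eq hr); rwa [clm_eval] at this
    rw [hr]
    apply EReal.coe_le_coe_iff.2
    have h3 : (u - a * s) / b ≤ r := by
      rw [div_le_iff₀ hb]; nlinarith
    calc -a/b * s + u/b = (u - a * s)/b := by field_simp; ring
    _ ≤ r := h3

lemma fenchelMoreau (hbot : ∀ t, L t ≠ ⊥) (hfin : ∃ t, L t ≠ ⊤) (hzero : L 0 = 0)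
    (hconv : ∀ p q a b : ℝ, 0 ≤ a → 0 ≤ b → a + b = 1 →
      L (a * p + b * q) ≤ (a : EReal) * L p + (b : EReal) * L q)
    (hlsc : LowerSemicontinuous L) (t : ℝ) :
    ⨆ z : ℝ, (((t * z : ℝ) : EReal) - LegendreEE L (z:EReal)) = L t := by
  apply le_antisymm
  · apply iSup_le; intro z
    by_cases hLt : L t = ⊤
    · rw [hLt]; exact le_top
    obtain ⟨rt, hrt⟩ := ereal_exists_real (hbot t) hLt
    by_cases hz : LegendreEE L (z:EReal) = ⊤
    · rw [hz, EReal.sub_top]; exact bot_le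
    obtain ⟨d, hd⟩ := ereal_exists_real (lst_ne_bot hzero z) hz
    have h1 : t * z - rt ≤ d := term_le_real hrt hd
    rw [hd, hrt, ← EReal.coe_sub, EReal.coe_le_coe_iff]
    linarith
  · by_contra hcon
    rw [not_le] at hcon
    obtain ⟨c, hc1, hc2⟩ := EReal.exists_between_coe_real hcon
    suffices h : ∃ z : ℝ, (c:EReal) < ((t * z : ℝ):EReal) - LegendreEE L (z:EReal) by
      obtain ⟨z, hz⟩ := h
      exact absurd (lt_of_lt_of_le hz
        (le_iSup (fun z : ℝ => ((t * z : ℝ):EReal) - LegendreEE L (z:EReal)) z)) (not_lt.2 hc1.le)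
    have hnot : ((t, c) : ℝ × ℝ) ∉ epiSet L := by
      simp only [epiSet, mem_setOf_eq, not_le]; exact hc2
    obtain ⟨f, u, hfu, hsep⟩ :=
      geometric_hahn_banach_point_closed (epi_convex hconv) (epi_closed hlsc) hnot
    set a := f (1, 0) with ha
    set b := f (0, 1) with hbdef
    have hfu' : a * t + b * c < u := by rw [← clm_eval]; exact hfu
    obtain ⟨t0, ht0⟩ := hfin
    obtain ⟨r0, hr0⟩ := ereal_exists_real (hbot t0) ht0
    have hmem0 : ((t0, r0) : ℝ × ℝ) ∈ epiSet L := le_of_eq hr0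
    have hu0 : u < a * t0 + b * r0 := by
      have := hsep _ hmem0; rwa [clm_eval] at this
    have hb0 : 0 ≤ b := by
      by_contra hbneg
      rw [not_le] at hbneg
      have hbne : b ≠ 0 := ne_of_lt hbneg
      set lam := (u - (a * t0 + b * r0)) / b with hlam
      have hlampos : 0 < lam := div_pos_of_neg_of_neg (by linarith) hbneg
      have hmem : ((t0, r0 + lam) : ℝ × ℝ) ∈ epiSet L := by
        show L t0 ≤ ((r0 + lam : ℝ) : EReal)
        rw [hr0]
        exact EReal.coe_le_coe_iff.2 (by linarith)
      have h2 := hsep _ hmem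
      rw [clm_eval, ← ha, ← hbdef] at h2
      have h3 : a * t0 + b * (r0 + lam) = u := by rw [hlam]; field_simp; ring
      linarith
    rcases eq_or_lt_of_le hb0 with hbz | hbpos
    · -- b = 0 case
      have hbzz : b = 0 := hbz.symm
      have hatu : a * t < u := by rw [hbzz] at hfu'; linarith
      obtain ⟨m, q, hmq⟩ := exists_minorant hbot ⟨t0, ht0⟩ hconv hlsc
      have hut : 0 < u - a * t := by linarith
      set lam := max 0 ((c - m * t - q + 1) / (u - a * t)) with hlamdef
      have hlam0 : 0 ≤ lam := le_max_left _ _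
      have hlam1 : c - m * t - q + 1 ≤ lam * (u - a * t) := by
        have h4 : (c - m * t - q + 1) / (u - a * t) ≤ lam := le_max_right _ _
        calc c - m * t - q + 1 = ((c - m * t - q + 1) / (u - a * t)) * (u - a * t) := by
              exact (div_mul_cancel₀ _ hut.ne').symm
        _ ≤ lam * (u - a * t) := mul_le_mul_of_nonneg_right h4 hut.le
      set z := m - lam * a with hzdef
      have hbd : LegendreEE L (z:EReal) ≤ ((-q - lam * u : ℝ):EReal) := by
        rw [lst_eq]; apply iSup_le; intro s
        by_cases hs : L s = ⊤
        · rw [hs, EReal.sub_top]; exact bot_le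
        obtain ⟨r, hr⟩ := ereal_exists_real (hbot s) hs
        have h1 : u < a * s := by
          have := hsep (s, r) (le_of_eq hr)
          rw [clm_eval, ← ha, ← hbdef, hbzz] at this; linarith
        have h2 : m * s + q ≤ r := by
          have := hmq s; rw [hr, EReal.coe_le_coe_iff] at this; exact this
        rw [hr, ← EReal.coe_sub, EReal.coe_le_coe_iff, hzdef]
        nlinarith [mul_le_mul_of_nonneg_left h1.le hlam0]
      have hne_top : LegendreEE L (z:EReal) ≠ ⊤ := by
        intro h; rw [h] at hbd; exact absurd (top_le_iff.1 hbd) (EReal.coe_ne_top _)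
      obtain ⟨d, hd⟩ := ereal_exists_real (lst_ne_bot hzero z) hne_top
      have hd' : d ≤ -q - lam * u := by rw [hd, EReal.coe_le_coe_iff] at hbd; exact hbd
      refine ⟨z, ?_⟩
      rw [hd, ← EReal.coe_sub, EReal.coe_lt_coe_iff, hzdef]
      nlinarith
    · -- b > 0 case
      set z := -a / b with hzdef
      have hzb : z * b = -a := by rw [hzdef, div_mul_cancel₀ _ hbpos.ne']
      have hbd : LegendreEE L (z:EReal) ≤ ((-u / b : ℝ):EReal) := by
        rw [lst_eq]; apply iSup_le; intro s
        by_cases hs : L s = ⊤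
        · rw [hs, EReal.sub_top]; exact bot_le
        obtain ⟨r, hr⟩ := ereal_exists_real (hbot s) hs
        have h1 : u < a * s + b * r := by
          have := hsep (s, r) (le_of_eq hr); rwa [clm_eval] at this
        rw [hr, ← EReal.coe_sub, EReal.coe_le_coe_iff]
        have h3 : (s * (-a) - r * b) / b ≤ (-u) / b :=
          (div_le_div_iff_of_pos_right hbpos).2 (by linarith)
        calc s * z - r = (s * (-a) - r * b) / b := by
              rw [hzdef]; field_simp
        _ ≤ -u / b := by rw [neg_div] at h3 ⊢; exact h3
      have hne_top : LegendreEE L (z:EReal) ≠ ⊤ := by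
        intro h; rw [h] at hbd; exact absurd (top_le_iff.1 hbd) (EReal.coe_ne_top _)
      obtain ⟨d, hd⟩ := ereal_exists_real (lst_ne_bot hzero z) hne_top
      have hd' : d ≤ -u / b := by rw [hd, EReal.coe_le_coe_iff] at hbd; exact hbd
      have hdb : d * b ≤ -u := by
        have := mul_le_mul_of_nonneg_right hd' hbpos.le
        rwa [div_mul_cancel₀ _ hbpos.ne'] at this
      refine ⟨z, ?_⟩
      rw [hd, ← EReal.coe_sub, EReal.coe_lt_coe_iff]
      have key : c * b < (t * z - d) * b := by
        have e : (t * z - d) * b = t * (z * b) - d * b := by ring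
        rw [e, hzb]; nlinarith
      exact lt_of_mul_lt_mul_right key hb0

/-- real value of Lstar on the domain -/
lemma lst_real (hzero : L 0 = 0) {z : ℝ} (hz : LegendreEE L (z:EReal) ≠ ⊤) :
    ∃ c : ℝ, 0 ≤ c ∧ LegendreEE L (z:EReal) = (c:EReal) := by
  obtain ⟨c, hc⟩ := ereal_exists_real (lst_ne_bot hzero z) hz
  refine ⟨c, ?_, hc⟩
  have := lst_nonneg hzero z
  rw [hc] at this
  exact_mod_cast this

lemma dense_sup (hbot : ∀ t, L t ≠ ⊥) (hzero : L 0 = 0) (zk : ℕ → ℝ)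
    (hzk : ∀ k, LegendreEE L ((zk k : ℝ) : EReal) ≠ ⊤)
    (hdense : {z : ℝ | LegendreEE L ((z : ℝ) : EReal) ≠ ⊤} ⊆ closure (Set.range zk)) (t : ℝ) :
    (⨆ k, (((t * zk k : ℝ):EReal) - LegendreEE L ((zk k : ℝ):EReal)))
      = ⨆ z : ℝ, (((t * z : ℝ):EReal) - LegendreEE L (z:EReal)) := by
  apply le_antisymm
  · exact iSup_le fun k => le_iSup (fun z : ℝ => ((t * z : ℝ):EReal) - LegendreEE L (z:EReal)) (zk k)
  apply iSup_le; intro z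
  by_cases hz : LegendreEE L (z:EReal) = ⊤
  · rw [hz, EReal.sub_top]; exact bot_le
  obtain ⟨cz, hcz0, hcz⟩ := lst_real hzero hz
  obtain ⟨c0, hc00, hc0⟩ := lst_real hzero (hzk 0)
  set S := ⨆ k, (((t * zk k : ℝ):EReal) - LegendreEE L ((zk k : ℝ):EReal)) with hS
  have hterm : ∀ k ck : ℝ, ∀ kk : ℕ, LegendreEE L ((zk kk : ℝ):EReal) = (ck:EReal) →
      ((t * zk kk - ck : ℝ) : EReal) ≤ S := by
    intro _ ck kk hck
    have : ((t * zk kk : ℝ):EReal) - LegendreEE L ((zk kk : ℝ):EReal) ≤ S :=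
      le_iSup (fun k => ((t * zk k : ℝ):EReal) - LegendreEE L ((zk k : ℝ):EReal)) kk
    rwa [hck, ← EReal.coe_sub] at this
  have claim : ∀ ε : ℝ, 0 < ε → ((t * z - cz - ε : ℝ) : EReal) ≤ S := by
    intro ε hε
    by_cases hzz : z = zk 0
    · have : cz = c0 := by
        have := hcz; rw [hzz, hc0] at this; exact_mod_cast this.symm
      refine le_trans ?_ (hterm 0 c0 0 hc0)
      apply EReal.coe_le_coe_iff.2
      rw [← hzz, this]; linarith
    · set d := zk 0 - z with hd
      have hdne : d ≠ 0 := sub_ne_zero.2 (Ne.symm hzz)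
      set D := |d| with hD
      have hDpos : 0 < D := abs_pos.2 hdne
      set T := |t| with hT
      have hT0 : 0 ≤ T := abs_nonneg t
      set K := T * D + c0 + cz + 1 with hK
      have hKpos : 0 < K := by positivity
      set θ := min (1/2 : ℝ) (ε / (2 * K)) with hθ
      have hθpos : 0 < θ := lt_min (by norm_num) (by positivity)
      have hθhalf : θ ≤ 1/2 := min_le_left _ _
      have hθK : 2 * θ * K ≤ ε := by
        have h1 : θ ≤ ε / (2 * K) := min_le_right _ _
        have := mul_le_mul_of_nonneg_right h1 (le_of_lt (by positivity : (0:ℝ) < 2 * K))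
        rw [div_mul_cancel₀ _ (by positivity : (2:ℝ) * K ≠ 0)] at this
        linarith
      set v := z + θ * d with hv
      have hvdom : LegendreEE L (v:EReal) ≠ ⊤ := by
        have hcv := lst_convex hbot hcz hc0 hθpos.le (by linarith)
        have harg : (1-θ)*z + θ*(zk 0) = v := by rw [hv, hd]; ring
        rw [harg] at hcv
        intro h; rw [h] at hcv
        exact absurd (top_le_iff.1 hcv) (EReal.coe_ne_top _)
      have hvcl : v ∈ closure (Set.range zk) := hdense hvdom
      set δ := θ * (1-θ) * D / 2 with hδ
      have hδpos : 0 < δ := by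
        have : 0 < 1 - θ := by linarith
        positivity
      obtain ⟨w, hwr, hwv⟩ := Metric.mem_closure_iff.1 hvcl δ hδpos
      obtain ⟨k, hk⟩ := hwr
      have hwv' : |v - w| < δ := by rwa [Real.dist_eq] at hwv
      set β := (w - z) / d with hβ
      have hβdef : β = θ + (w - v) / d := by
        rw [hβ, hv]; field_simp; ring
      have hfrac : |(w - v)/d| ≤ θ * (1-θ) / 2 := by
        rw [abs_div]
        rw [div_le_iff₀ hDpos]
        have : |w - v| < δ := by rwa [abs_sub_comm] at hwv'
        rw [hδ] at this; linarith
      have hfrac' : -(θ * (1-θ)/2) ≤ (w - v)/d ∧ (w - v)/d ≤ θ * (1-θ)/2 :=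
        abs_le.1 hfrac
      have hβ0 : 0 ≤ β := by
        rw [hβdef]; nlinarith [hfrac'.1]
      have hβ1 : β ≤ 1 := by
        rw [hβdef]; nlinarith [hfrac'.2]
      have hβle : β ≤ 3/2 * θ := by
        rw [hβdef]; nlinarith [hfrac'.2]
      obtain ⟨ck, hck0, hck⟩ := lst_real hzero (hzk k)
      have hcvw := lst_convex hbot hcz hc0 hβ0 hβ1
      have harg : (1-β)*z + β*(zk 0) = w := by
        rw [hβ, hd]; field_simp; ring
      rw [harg, ← hk, hck, EReal.coe_le_coe_iff] at hcvw
      -- hcvw : ck ≤ (1-β)*cz + β*c0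
      refine le_trans ?_ (hterm 0 ck k hck)
      apply EReal.coe_le_coe_iff.2
      -- t * z - cz - ε ≤ t * w - ck
      have hwz : w = z + β * d := by rw [hβ]; field_simp; ring
      have htd : -(T * D) ≤ t * d := by
        have := neg_abs_le (t * d)
        rwa [abs_mul, ← hT, ← hD] at this
      have h2 : -β * (T*D) ≤ β * (t * d) := by nlinarith [mul_le_mul_of_nonneg_left htd hβ0]
      have h3 : β * (T*D) ≤ (3/2*θ) * (T*D) := mul_le_mul_of_nonneg_right hβle (by positivity)
      have h5 : β * c0 ≤ (3/2*θ) * c0 := mul_le_mul_of_nonneg_right hβle hc00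
      have h6 : 0 ≤ β * cz := mul_nonneg hβ0 hcz0
      have hk' : t * w = t * z + β * (t * d) := by rw [hwz]; ring
      rw [hk]
      nlinarith [hθK, hcvw]
  by_contra hcon
  rw [not_le] at hcon
  obtain ⟨c, hc1, hc2⟩ := EReal.exists_between_coe_real hcon
  have hx : (c : EReal) < ((t*z:ℝ):EReal) - LegendreEE L (z:EReal) := hc2
  rw [hcz, ← EReal.coe_sub, EReal.coe_lt_coe_iff] at hx
  have := claim (t*z - cz - c) (by linarith)
  have h7 : ((t * z - cz - (t*z - cz - c) : ℝ) : EReal) = (c : EReal) := by norm_num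
  rw [h7] at this
  exact absurd (lt_of_le_of_lt this hc1) (lt_irrefl _)

end FM

lemma paperMeasure_lintegral (L : ℝ → EReal) (zk : ℕ → ℝ) (n : ℕ) (f : ℝ → ℝ) :
    ∫⁻ z : ℝ, ENNReal.ofReal (Real.exp (f z)) ∂(paperMeasure L zk n)
    = (ENNReal.ofReal (∑ k ∈ Finset.range n,
          Real.exp (-(n : ℝ) * (LegendreEE L ((zk k : ℝ) : EReal)).toReal)))⁻¹ *
       ENNReal.ofReal (∑ k ∈ Finset.range n,
          Real.exp (f (zk k) + -(n : ℝ) * (LegendreEE L ((zk k : ℝ) : EReal)).toReal)) := by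
  rw [paperMeasure, lintegral_smul_measure, lintegral_finset_sum_measure]
  congr 1
  · congr 1
    exact (ENNReal.ofReal_sum_of_nonneg (fun k _ => (Real.exp_pos _).le)).symm
  · rw [ENNReal.ofReal_sum_of_nonneg (fun k _ => (Real.exp_pos _).le)]
    apply Finset.sum_congr rfl
    intro k _
    rw [lintegral_smul_measure, lintegral_dirac, smul_eq_mul, ← ENNReal.ofReal_mul (Real.exp_pos _).le,
      ← Real.exp_add]
    congr 1
    ring


theorem statement19 (L : ℝ → EReal)
    (hbot : ∀ t : ℝ, L t ≠ ⊥) (hfin : ∃ t : ℝ, L t ≠ ⊤) (hzero : L 0 = 0)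
    (hconv : ∀ p q a b : ℝ, 0 ≤ a → 0 ≤ b → a + b = 1 →
      L (a * p + b * q) ≤ (a : EReal) * L p + (b : EReal) * L q)
    (hlsc : LowerSemicontinuous L)
    (zk : ℕ → ℝ) (hzk : ∀ k, LegendreEE L ((zk k : ℝ) : EReal) ≠ ⊤)
    (hdense : {z : ℝ | LegendreEE L ((z : ℝ) : EReal) ≠ ⊤} ⊆ closure (Set.range zk)) :
    (∀ n : ℕ, 1 ≤ n → IsProbabilityMeasure (paperMeasure L zk n)) ∧
    (∀ t : ℝ, Filter.Tendsto (fun n : ℕ =>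
        elog ((n : ℝ))⁻¹
          (∫⁻ z : ℝ, ENNReal.ofReal (Real.exp (t * z / ((n : ℝ))⁻¹)) ∂ (paperMeasure L zk n)))
      Filter.atTop (nhds (L t))) ∧
    (∀ t : ℝ, genLogMGF Filter.atTop (paperMeasure L zk) (fun n : ℕ => ((n : ℝ))⁻¹) t = L t) := by
  classical
  -- real values of the Legendre transform at the z_k
  have hck : ∀ k, LegendreEE L ((zk k : ℝ):EReal)
      = (((LegendreEE L ((zk k : ℝ):EReal)).toReal : ℝ) : EReal) := fun k =>
    (EReal.coe_toReal (hzk k) (lst_ne_bot hzero (zk k))).symm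
  have hc0 : ∀ k, 0 ≤ (LegendreEE L ((zk k : ℝ):EReal)).toReal := by
    intro k
    have := lst_nonneg hzero (zk k)
    rw [hck k] at this
    exact_mod_cast this
  -- the denominator sums
  have hBpos : ∀ n : ℕ, 1 ≤ n →
      0 < ∑ k ∈ Finset.range n, Real.exp (-(n:ℝ) * (LegendreEE L ((zk k : ℝ):EReal)).toReal) := by
    intro n hn
    exact Finset.sum_pos (fun k _ => Real.exp_pos _) (Finset.nonempty_range_iff.2 (by omega))
  -- probability measure
  have hprob : ∀ n : ℕ, 1 ≤ n → IsProbabilityMeasure (paperMeasure L zk n) := by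
    intro n hn
    constructor
    have h1 : (paperMeasure L zk n) Set.univ
        = ∫⁻ z : ℝ, ENNReal.ofReal (Real.exp ((fun _ : ℝ => (0:ℝ)) z)) ∂(paperMeasure L zk n) := by
      simp [Real.exp_zero]
    rw [h1, paperMeasure_lintegral L zk n]
    simp only [zero_add]
    exact ENNReal.inv_mul_cancel
      (by simpa using ENNReal.ofReal_pos.2 (hBpos n hn) |>.ne')
      ENNReal.ofReal_ne_top
  have hmain : ∀ t : ℝ, Filter.Tendsto (fun n : ℕ =>
        elog ((n : ℝ))⁻¹
          (∫⁻ z : ℝ, ENNReal.ofReal (Real.exp (t * z / ((n : ℝ))⁻¹)) ∂ (paperMeasure L zk n)))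
      Filter.atTop (nhds (L t)) := by
    intro t
    -- the two sequences
    set a : ℕ → ℝ := fun k => t * zk k - (LegendreEE L ((zk k : ℝ):EReal)).toReal with hadef
    set b : ℕ → ℝ := fun k => 0 * zk k - (LegendreEE L ((zk k : ℝ):EReal)).toReal with hbdef
    have hSA : (⨆ k, (a k : EReal)) = L t := by
      rw [← fenchelMoreau hbot hfin hzero hconv hlsc t,
        ← dense_sup hbot hzero zk hzk hdense t]
      apply iSup_congr
      intro k
      rw [hck k, ← EReal.coe_sub]
    have hSB : (⨆ k, (b k : EReal)) = (0 : EReal) := by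
      have h0 : (⨆ k, (b k : EReal)) = L 0 := by
        rw [← fenchelMoreau hbot hfin hzero hconv hlsc 0,
          ← dense_sup hbot hzero zk hzk hdense 0]
        apply iSup_congr
        intro k
        rw [hck k, ← EReal.coe_sub]
      rw [h0, hzero]
    have hA := logsumexp a
    have hB := logsumexp b
    rw [hSA] at hA
    rw [hSB] at hB
    -- B limit as real sequence
    have hBreal : Tendsto (fun n : ℕ => ((n:ℝ))⁻¹ * Real.log (∑ k ∈ Finset.range n,
        Real.exp ((n:ℝ) * b k))) atTop (𝓝 0) := by
      have := hB
      rw [show (0:EReal) = ((0:ℝ):EReal) by simp] at this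
      exact EReal.tendsto_coe.1 this
    -- assemble
    set gA : ℕ → ℝ := fun n => ((n:ℝ))⁻¹ * Real.log (∑ k ∈ Finset.range n,
        Real.exp ((n:ℝ) * a k)) with hgA
    set gB : ℕ → ℝ := fun n => ((n:ℝ))⁻¹ * Real.log (∑ k ∈ Finset.range n,
        Real.exp ((n:ℝ) * b k)) with hgB
    have hsum : Tendsto (fun n : ℕ => ((gA n : ℝ) : EReal) + (((-gB n : ℝ)) : EReal)) atTop
        (𝓝 (L t)) := by
      have hcont : ContinuousAt (fun p : EReal × EReal => p.1 + p.2) (L t, ((0:ℝ):EReal)) :=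
        EReal.continuousAt_add (by simp) (by simp)
      have hpair : Tendsto (fun n : ℕ => (((gA n : ℝ) : EReal), ((-gB n : ℝ) : EReal))) atTop
          (𝓝 (L t, ((0:ℝ):EReal))) := by
        apply Tendsto.prodMk_nhds hA
        exact EReal.tendsto_coe.2 (by simpa using hBreal.neg)
      have := hcont.tendsto.comp hpair
      simpa [Function.comp_def] using this
    apply hsum.congr'
    filter_upwards [eventually_ge_atTop 1] with n hn
    have hnR : (0:ℝ) < (n:ℝ) := by exact_mod_cast Nat.lt_of_lt_of_le Nat.zero_lt_one hn
    -- identify the function value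
    have hint := paperMeasure_lintegral L zk n (fun z => t * z / ((n:ℝ))⁻¹)
    have hAeq : (∑ k ∈ Finset.range n,
        Real.exp (t * zk k / ((n:ℝ))⁻¹ + -(n : ℝ) * (LegendreEE L ((zk k : ℝ):EReal)).toReal))
        = ∑ k ∈ Finset.range n, Real.exp ((n:ℝ) * a k) := by
      apply Finset.sum_congr rfl
      intro k _
      congr 1
      rw [hadef]
      field_simp
      ring
    have hBeq : (∑ k ∈ Finset.range n, Real.exp (-(n : ℝ) * (LegendreEE L ((zk k : ℝ):EReal)).toReal))
        = ∑ k ∈ Finset.range n, Real.exp ((n:ℝ) * b k) := by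
      apply Finset.sum_congr rfl
      intro k _
      congr 1
      rw [hbdef]
      ring
    rw [hint, hBeq, hAeq]
    have hApos : 0 < ∑ k ∈ Finset.range n, Real.exp ((n:ℝ) * a k) :=
      Finset.sum_pos (fun k _ => Real.exp_pos _) (Finset.nonempty_range_iff.2 (by omega))
    have hBpos' : 0 < ∑ k ∈ Finset.range n, Real.exp ((n:ℝ) * b k) := by
      rw [← hBeq]; exact hBpos n hn
    rw [show (ENNReal.ofReal (∑ k ∈ Finset.range n, Real.exp ((n:ℝ) * b k)))⁻¹ *
          ENNReal.ofReal (∑ k ∈ Finset.range n, Real.exp ((n:ℝ) * a k))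
        = ENNReal.ofReal ((∑ k ∈ Finset.range n, Real.exp ((n:ℝ) * a k))
            / (∑ k ∈ Finset.range n, Real.exp ((n:ℝ) * b k))) by
      rw [ENNReal.ofReal_div_of_pos hBpos', div_eq_mul_inv, mul_comm]]
    rw [elog, ENNReal.log_ofReal_of_pos (div_pos hApos hBpos'),
      Real.log_div hApos.ne' hBpos'.ne']
    rw [← EReal.coe_mul]
    rw [show ((n:ℝ))⁻¹ * (Real.log (∑ k ∈ Finset.range n, Real.exp ((n:ℝ) * a k))
        - Real.log (∑ k ∈ Finset.range n, Real.exp ((n:ℝ) * b k))) = gA n + - gB n by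
      rw [hgA, hgB]; ring]
    rw [EReal.coe_add]
  refine ⟨hprob, hmain, fun t => ?_⟩
  rw [genLogMGF]
  exact (hmain t).limsup_eq
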